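/- Let f, g_1, …, g_m : ℝⁿ → ℝⁿ be continuously differentiable with, for all z ∈ ℝⁿ and all i: ‖f(z)‖ ≤ K, ‖g_i(z)‖ ≤ K_i, ‖Df(z)‖ ≤ L, ‖Dg_i(z)‖ ≤ L_i, and λ∞(Df(z)) ≤ 0. Let v_i : [t_k, t_k+h] → ℝ be measurable with |v_i(t)| ≤ V_i, and let w_i be the constants w_i = (1/h)∫_{t_k}^{t_k+h} v_i(t) dt. Let x be a solution of ẋ = f(x) + Σ_i g_i(x)v_i(t) and y a solution of ẏ = f(y) + Σ_i g_i(y)w_i on [t_k, t_k+h] with y(t_k) = x(t_k). Then, with K' = Σ_i V_i K_i and L' = Σ_i V_i L_i, ‖x(t_k+h) − y(t_k+h)‖ ≤ h²·( (K+K')·L'/3 + 2·K'·(L+L') ). -/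

import Mathlib

open MeasureTheory Set

/-- The logarithmic norm `λ∞(A) = max_k ( a_{kk} + Σ_{i≠k} |a_{ki}| )` of a linear map on
`ℝⁿ` with the supremum norm, expressed via its matrix entries `a_{ki} = (A eᵢ)_k`. -/
noncomputable def logNormInf {n : ℕ} (A : (Fin n → ℝ) →L[ℝ] (Fin n → ℝ)) : ℝ :=
  ⨆ k, (A (Pi.single k 1) k + ∑ i ∈ Finset.univ.erase k, |A (Pi.single i 1) k|)

lemma slope_aux {n : ℕ} (u c : Fin n → ℝ)
    (hdis : ∀ k, (∀ j, |u j| ≤ |u k|) → u k * c k ≤ 0)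
    (h0 : u = 0 → c = 0) :
    ∃ δ > 0, ∀ s : ℝ, 0 < s → s < δ → ‖u + s • c‖ ≤ ‖u‖ := by
  by_cases hu : u = 0
  · exact ⟨1, one_pos, fun s _ _ => by simp [hu, h0 hu]⟩
  · have hδk : ∀ k : Fin n, ∃ δ, 0 < δ ∧ ∀ s : ℝ, 0 < s → s < δ → |u k + s * c k| ≤ ‖u‖ := by
      intro k
      by_cases hk : |u k| = ‖u‖
      · have hmax : ∀ j, |u j| ≤ |u k| := fun j => by
          rw [hk]; simpa [Real.norm_eq_abs] using norm_le_pi_norm u j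
        have huk : u k ≠ 0 := by
          intro h
          apply hu
          ext j
          have h2 := hmax j
          rw [h, abs_zero] at h2
          have : |u j| = 0 := le_antisymm h2 (abs_nonneg _)
          simpa using abs_eq_zero.mp this
        have hc := hdis k hmax
        refine ⟨|u k| / (|c k| + 1), by positivity, fun s hs hs' => ?_⟩
        rw [← hk]
        have h1 : (0:ℝ) < |c k| + 1 := by positivity
        have hsc : s * (|c k| + 1) < |u k| := by
          rw [div_eq_mul_inv] at hs'
          calc s * (|c k| + 1) < |u k| / (|c k| + 1) * (|c k| + 1) := by
                apply mul_lt_mul_of_pos_right _ h1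
                rwa [div_eq_mul_inv]
          _ = |u k| := by field_simp
        rcases lt_or_gt_of_ne huk with hneg | hpos
        · have hck : 0 ≤ c k := by nlinarith
          have habs : |u k| = -(u k) := abs_of_neg hneg
          rw [abs_le]
          constructor
          · nlinarith
          · nlinarith [le_abs_self (c k)]
        · have hck : c k ≤ 0 := by nlinarith
          have habs : |u k| = u k := abs_of_pos hpos
          rw [abs_le]
          constructor
          · nlinarith [neg_abs_le (c k)]
          · nlinarith
      · have hlt : |u k| < ‖u‖ :=
          lt_of_le_of_ne (by simpa [Real.norm_eq_abs] using norm_le_pi_norm u k) hk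
        have hpos2 : 0 < ‖u‖ - |u k| := by linarith
        refine ⟨(‖u‖ - |u k|) / (|c k| + 1), by positivity, fun s hs hs' => ?_⟩
        have h1 : (0:ℝ) < |c k| + 1 := by positivity
        have hsc : s * (|c k| + 1) < ‖u‖ - |u k| := by
          calc s * (|c k| + 1) < (‖u‖ - |u k|) / (|c k| + 1) * (|c k| + 1) :=
                mul_lt_mul_of_pos_right hs' h1
          _ = ‖u‖ - |u k| := by field_simp
        calc |u k + s * c k| ≤ |u k| + s * |c k| := by
              refine (abs_add_le _ _).trans ?_
              rw [abs_mul, abs_of_pos hs]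
        _ ≤ ‖u‖ := by nlinarith
    choose δf hδf using hδk
    have hne : Nonempty (Fin n) := by
      rcases Function.ne_iff.1 hu with ⟨j, _⟩
      exact ⟨j⟩
    have hne' : (Finset.univ : Finset (Fin n)).Nonempty := Finset.univ_nonempty
    refine ⟨Finset.univ.inf' hne' δf, ?_, fun s hs hs' => ?_⟩
    · rw [gt_iff_lt, Finset.lt_inf'_iff]
      exact fun k _ => (hδf k).1
    · rw [pi_norm_le_iff_of_nonneg (norm_nonneg u)]
      intro k
      have : s < δf k := lt_of_lt_of_le hs' (Finset.inf'_le _ (Finset.mem_univ k))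
      simpa [Real.norm_eq_abs] using (hδf k).2 s hs this

lemma lognorm_key {n : ℕ} (A : (Fin n → ℝ) →L[ℝ] (Fin n → ℝ)) (hA : logNormInf A ≤ 0)
    (u : Fin n → ℝ) (k : Fin n) (hk : ∀ j, |u j| ≤ |u k|) :
    u k * A u k ≤ 0 := by
  have hexp : A u k = ∑ i, u i * A (Pi.single i 1) k := by
    have hu : u = ∑ i, u i • (Pi.single i (1:ℝ) : Fin n → ℝ) := by
      ext j
      rw [Finset.sum_apply]
      simp [Pi.single_apply]
    conv_lhs => rw [hu]
    rw [map_sum]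
    rw [Finset.sum_apply]
    congr 1
    ext i
    rw [A.map_smul]
    simp [smul_eq_mul]
  have hbdd : A (Pi.single k 1) k + ∑ i ∈ Finset.univ.erase k, |A (Pi.single i 1) k| ≤ 0 := by
    refine le_trans ?_ hA
    exact le_ciSup (f := fun k => A (Pi.single k 1) k +
      ∑ i ∈ Finset.univ.erase k, |A (Pi.single i 1) k|)
      (Set.Finite.bddAbove (Set.finite_range _)) k
  rw [hexp, Finset.mul_sum, ← Finset.add_sum_erase _ _ (Finset.mem_univ k)]
  have hsum : ∑ i ∈ Finset.univ.erase k, u k * (u i * A (Pi.single i 1) k) ≤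
      ∑ i ∈ Finset.univ.erase k, u k ^ 2 * |A (Pi.single i 1) k| := by
    apply Finset.sum_le_sum
    intro i _
    have h1 : u k * (u i * A (Pi.single i 1) k) ≤ |u k| * (|u i| * |A (Pi.single i 1) k|) := by
      calc u k * (u i * A (Pi.single i 1) k) ≤ |u k * (u i * A (Pi.single i 1) k)| :=
            le_abs_self _
      _ = |u k| * (|u i| * |A (Pi.single i 1) k|) := by rw [abs_mul, abs_mul]
    have h2 := hk i
    calc u k * (u i * A (Pi.single i 1) k) ≤ |u k| * (|u i| * |A (Pi.single i 1) k|) := h1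
    _ ≤ |u k| * (|u k| * |A (Pi.single i 1) k|) := by
        apply mul_le_mul_of_nonneg_left _ (abs_nonneg _)
        exact mul_le_mul_of_nonneg_right h2 (abs_nonneg _)
    _ = u k ^ 2 * |A (Pi.single i 1) k| := by rw [← sq_abs]; ring
  have hkk : u k * (u k * A (Pi.single k 1) k) = u k ^ 2 * A (Pi.single k 1) k := by ring
  calc u k * (u k * A (Pi.single k 1) k) +
        ∑ i ∈ Finset.univ.erase k, u k * (u i * A (Pi.single i 1) k)
      ≤ u k ^ 2 * A (Pi.single k 1) k + ∑ i ∈ Finset.univ.erase k, u k ^ 2 * |A (Pi.single i 1) k| := by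
        rw [hkk]; linarith
    _ = u k ^ 2 * (A (Pi.single k 1) k + ∑ i ∈ Finset.univ.erase k, |A (Pi.single i 1) k|) := by
        rw [mul_add, Finset.mul_sum]
    _ ≤ 0 := mul_nonpos_of_nonneg_of_nonpos (sq_nonneg _) hbdd

lemma diss_aux {n : ℕ} (f : (Fin n → ℝ) → (Fin n → ℝ)) (hf : ContDiff ℝ 1 f)
    (hΛ : ∀ z, logNormInf (fderiv ℝ f z) ≤ 0) (a b : Fin n → ℝ) :
    ∀ k, (∀ j, |(a - b) j| ≤ |(a - b) k|) → (a - b) k * ((f a - f b) k) ≤ 0 := by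
  intro k hk
  set u := a - b with hu
  have hfd : Differentiable ℝ f := hf.differentiable one_ne_zero
  have hder : ∀ t : ℝ, HasDerivAt (fun t : ℝ => u k * f (b + t • u) k)
      (u k * (fderiv ℝ f (b + t • u)) u k) t := by
    intro t
    have h1 : HasDerivAt (fun t : ℝ => b + t • u) u t := by
      simpa using ((hasDerivAt_id t).smul_const u).const_add b
    have h2 : HasDerivAt (fun t : ℝ => f (b + t • u)) ((fderiv ℝ f (b + t • u)) u) t :=
      (hfd (b + t • u)).hasFDerivAt.comp_hasDerivAt t h1
    have h3 : HasDerivAt (fun t : ℝ => f (b + t • u) k) ((fderiv ℝ f (b + t • u)) u k) t := by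
      have := (ContinuousLinearMap.proj (R := ℝ) (φ := fun _ : Fin n => ℝ) k).hasFDerivAt.comp_hasDerivAt t h2
      exact this
    exact h3.const_mul (u k)
  obtain ⟨t, _, heq⟩ := exists_hasDerivAt_eq_slope (fun t : ℝ => u k * f (b + t • u) k)
      (fun t => u k * (fderiv ℝ f (b + t • u)) u k) zero_lt_one
      (fun t _ => (hder t).continuousAt.continuousWithinAt) (fun t _ => hder t)
  have hle : u k * (fderiv ℝ f (b + t • u)) u k ≤ 0 :=
    lognorm_key _ (hΛ _) u k hk
  rw [heq] at hle
  have h1 : b + (1:ℝ) • u = a := by simp [hu]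
  have h0 : b + (0:ℝ) • u = b := by simp
  rw [h1, h0] at hle
  have : u k * f a k - u k * f b k ≤ 0 := by
    have := hle
    simp only [sub_zero, div_one] at this
    linarith
  have hgoal : (a - b) k * ((f a - f b) k) = u k * f a k - u k * f b k := by
    simp [hu, Pi.sub_apply]
    ring
  linarith [hgoal ▸ this]


set_option maxHeartbeats 1000000 in
/-- Second-order local error for the constant (average) input
approximation when `λ∞(Df(z)) ≤ 0`:
`‖x(t_k+h) − y(t_k+h)‖ ≤ h²·( (K+K')·L'/3 + 2·K'·(L+L') )`
with `K' = Σᵢ VᵢKᵢ` and `L' = Σᵢ VᵢLᵢ`. -/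
theorem local_error_second_order_constant_nonpos_lognorm {n m : ℕ}
    (f : (Fin n → ℝ) → (Fin n → ℝ)) (g : Fin m → (Fin n → ℝ) → (Fin n → ℝ))
    (v : Fin m → ℝ → ℝ) (w : Fin m → ℝ)
    (K : ℝ) (Kg : Fin m → ℝ) (L : ℝ) (Lg : Fin m → ℝ) (V : Fin m → ℝ) (tk h : ℝ)
    (x y : ℝ → Fin n → ℝ)
    (hh : 0 < h)
    (hf : ContDiff ℝ 1 f)
    (hK : ∀ z, ‖f z‖ ≤ K)
    (hL : ∀ z, ‖fderiv ℝ f z‖ ≤ L)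
    (hΛ : ∀ z, logNormInf (fderiv ℝ f z) ≤ 0)
    (hg : ∀ i, ContDiff ℝ 1 (g i))
    (hKg : ∀ i z, ‖g i z‖ ≤ Kg i)
    (hLg : ∀ i z, ‖fderiv ℝ (g i) z‖ ≤ Lg i)
    (hv : ∀ i, Measurable (v i))
    (hV : ∀ i, ∀ t ∈ Icc tk (tk + h), |v i t| ≤ V i)
    (hw : ∀ i, w i = (1 / h) * ∫ t in tk..(tk + h), v i t)
    (hxc : ContinuousOn x (Icc tk (tk + h)))
    (hx : ∀ t ∈ Icc tk (tk + h),
      x t = x tk + ∫ s in tk..t, (f (x s) + ∑ i, v i s • g i (x s)))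
    (hyc : ContinuousOn y (Icc tk (tk + h)))
    (hy : ∀ t ∈ Icc tk (tk + h),
      y t = y tk + ∫ s in tk..t, (f (y s) + ∑ i, w i • g i (y s)))
    (hinit : y tk = x tk) :
    ‖x (tk + h) - y (tk + h)‖ ≤
      h ^ 2 * ((K + ∑ i, V i * Kg i) * (∑ i, V i * Lg i) / 3 +
        2 * (∑ i, V i * Kg i) * (L + ∑ i, V i * Lg i)) := by
  classical
  set T := tk + h with hTdef
  have htkT : tk ≤ T := by simp only [hTdef]; linarith
  set K' := ∑ i, V i * Kg i with hK'def
  set L' := ∑ i, V i * Lg i with hL'def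
  -- basic nonnegativity
  have hK0 : 0 ≤ K := le_trans (norm_nonneg _) (hK 0)
  have hKg0 : ∀ i, 0 ≤ Kg i := fun i => le_trans (norm_nonneg _) (hKg i 0)
  have hL0 : 0 ≤ L := le_trans (norm_nonneg _) (hL 0)
  have hLg0 : ∀ i, 0 ≤ Lg i := fun i => le_trans (norm_nonneg _) (hLg i 0)
  have htkmem : tk ∈ Icc tk T := ⟨le_refl _, htkT⟩
  have hTmem : T ∈ Icc tk T := ⟨htkT, le_refl _⟩
  have hV0 : ∀ i, 0 ≤ V i := fun i => le_trans (abs_nonneg _) (hV i tk htkmem)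
  have hK'0 : 0 ≤ K' := Finset.sum_nonneg fun i _ => mul_nonneg (hV0 i) (hKg0 i)
  have hL'0 : 0 ≤ L' := Finset.sum_nonneg fun i _ => mul_nonneg (hV0 i) (hLg0 i)
  -- Lipschitz bounds for f and g i
  have hfLip : ∀ a b : Fin n → ℝ, ‖f a - f b‖ ≤ L * ‖a - b‖ := by
    intro a b
    exact (convex_univ).norm_image_sub_le_of_norm_fderiv_le
      (fun z _ => (hf.differentiable one_ne_zero) z) (fun z _ => hL z)
      (mem_univ b) (mem_univ a)
  have hgLip : ∀ i, ∀ a b : Fin n → ℝ, ‖g i a - g i b‖ ≤ Lg i * ‖a - b‖ := by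
    intro i a b
    exact (convex_univ).norm_image_sub_le_of_norm_fderiv_le
      (fun z _ => ((hg i).differentiable one_ne_zero) z) (fun z _ => hLg i z)
      (mem_univ b) (mem_univ a)
  -- |w i| ≤ V i
  have hwV : ∀ i, |w i| ≤ V i := by
    intro i
    have hb : ∀ s ∈ Set.uIoc tk T, ‖v i s‖ ≤ V i := by
      intro s hs
      have : s ∈ Icc tk T := by
        have := Set.uIoc_subset_uIcc hs
        rwa [uIcc_of_le htkT] at this
      simpa [Real.norm_eq_abs] using hV i s this
    have hbig := intervalIntegral.norm_integral_le_of_norm_le_const hb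
    rw [hw i, abs_mul, abs_div, abs_one]
    have hTtk : |T - tk| = h := by rw [hTdef]; simp [abs_of_pos hh]
    rw [hTtk] at hbig
    rw [Real.norm_eq_abs] at hbig
    calc 1 / |h| * |∫ t in tk..T, v i t| ≤ 1 / h * (V i * h) := by
          rw [abs_of_pos hh]
          exact mul_le_mul_of_nonneg_left hbig (by positivity)
    _ = V i := by field_simp
  -- integrands
  set F1 : ℝ → Fin n → ℝ := fun s => f (x s) + ∑ i, v i s • g i (x s) with hF1def
  set F2 : ℝ → Fin n → ℝ := fun s => f (y s) + ∑ i, w i • g i (y s) with hF2def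
  set q : ℝ → Fin n → ℝ := fun s => ∑ i, (v i s - w i) • g i (x s) with hqdef
  set G : ℝ → Fin n → ℝ := fun s =>
    f (x s) - f (y s) + ∑ i, w i • (g i (x s) - g i (y s)) with hGdef
  -- integrability toolkit
  have hfin : volume (Icc tk T) ≠ ⊤ := (measure_Icc_lt_top).ne
  have hxm : AEStronglyMeasurable x (volume.restrict (Icc tk T)) :=
    hxc.aestronglyMeasurable measurableSet_Icc
  have hym : AEStronglyMeasurable y (volume.restrict (Icc tk T)) :=
    hyc.aestronglyMeasurable measurableSet_Icc
  have hbdd_int : ∀ (F : ℝ → Fin n → ℝ) (C : ℝ),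
      AEStronglyMeasurable F (volume.restrict (Icc tk T)) →
      (∀ s ∈ Icc tk T, ‖F s‖ ≤ C) → IntegrableOn F (Icc tk T) volume := by
    intro F C hm hb
    refine ⟨hm, ?_⟩
    refine HasFiniteIntegral.restrict_of_bounded (C := C) hfin.lt_top ?_
    exact (ae_restrict_iff' measurableSet_Icc).2 (Filter.Eventually.of_forall hb)
  have hII : ∀ (F : ℝ → Fin n → ℝ), IntegrableOn F (Icc tk T) volume →
      ∀ a ∈ Icc tk T, ∀ b ∈ Icc tk T, IntervalIntegrable F volume a b := by
    intro F hF a ha b hb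
    apply IntegrableOn.intervalIntegrable
    apply hF.mono_set
    have ha' : a ∈ uIcc tk T := by rwa [uIcc_of_le htkT]
    have hb' : b ∈ uIcc tk T := by rwa [uIcc_of_le htkT]
    simpa [uIcc_of_le htkT] using uIcc_subset_uIcc ha' hb'
  -- measurability of pieces
  have hgxm : ∀ i, AEStronglyMeasurable (fun s => g i (x s)) (volume.restrict (Icc tk T)) :=
    fun i => ((hg i).continuous.comp_continuousOn hxc).aestronglyMeasurable measurableSet_Icc
  have hgym : ∀ i, AEStronglyMeasurable (fun s => g i (y s)) (volume.restrict (Icc tk T)) :=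
    fun i => ((hg i).continuous.comp_continuousOn hyc).aestronglyMeasurable measurableSet_Icc
  have hvm : ∀ i, AEStronglyMeasurable (v i) (volume.restrict (Icc tk T)) :=
    fun i => (hv i).aestronglyMeasurable
  have hAint : IntegrableOn (fun s => f (x s)) (Icc tk T) volume := by
    refine hbdd_int _ K ((hf.continuous.comp_continuousOn hxc).aestronglyMeasurable
      measurableSet_Icc) fun s _ => hK _
  have hCint : IntegrableOn (fun s => f (y s)) (Icc tk T) volume := by
    refine hbdd_int _ K ((hf.continuous.comp_continuousOn hyc).aestronglyMeasurable
      measurableSet_Icc) fun s _ => hK _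
  -- pointwise sum bounds
  have hBpt : ∀ s ∈ Icc tk T, ‖∑ i, v i s • g i (x s)‖ ≤ K' := by
    intro s hs
    refine (norm_sum_le _ _).trans ?_
    rw [hK'def]
    refine Finset.sum_le_sum fun i _ => ?_
    rw [norm_smul, Real.norm_eq_abs]
    exact mul_le_mul (hV i s hs) (hKg i _) (norm_nonneg _) (hV0 i)
  have hDpt : ∀ s ∈ Icc tk T, ‖∑ i, w i • g i (y s)‖ ≤ K' := by
    intro s _
    refine (norm_sum_le _ _).trans ?_
    rw [hK'def]
    refine Finset.sum_le_sum fun i _ => ?_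
    rw [norm_smul, Real.norm_eq_abs]
    exact mul_le_mul (hwV i) (hKg i _) (norm_nonneg _) (hV0 i)
  have hqpt : ∀ s ∈ Icc tk T, ‖q s‖ ≤ 2 * K' := by
    intro s hs
    simp only [hqdef]
    refine (norm_sum_le _ _).trans ?_
    rw [hK'def, Finset.mul_sum]
    refine Finset.sum_le_sum fun i _ => ?_
    rw [norm_smul, Real.norm_eq_abs]
    calc |v i s - w i| * ‖g i (x s)‖ ≤ (V i + V i) * Kg i := by
          refine mul_le_mul ?_ (hKg i _) (norm_nonneg _) (by linarith [hV0 i])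
          exact (abs_sub _ _).trans (add_le_add (hV i s hs) (hwV i))
    _ = 2 * (V i * Kg i) := by ring
  have hBint : IntegrableOn (fun s => ∑ i, v i s • g i (x s)) (Icc tk T) volume := by
    refine hbdd_int _ K' ?_ hBpt
    exact Finset.aestronglyMeasurable_fun_sum _ fun i _ => (hvm i).fun_smul (hgxm i)
  have hDint : IntegrableOn (fun s => ∑ i, w i • g i (y s)) (Icc tk T) volume := by
    refine hbdd_int _ K' ?_ hDpt
    exact Finset.aestronglyMeasurable_fun_sum _ fun i _ => aestronglyMeasurable_const.fun_smul (hgym i)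
  have hqint : IntegrableOn q (Icc tk T) volume := by
    refine hbdd_int _ (2 * K') ?_ hqpt
    exact Finset.aestronglyMeasurable_fun_sum _ fun i _ =>
      ((hvm i).fun_sub aestronglyMeasurable_const).fun_smul (hgxm i)
  have hF1int : IntegrableOn F1 (Icc tk T) volume := hAint.add hBint
  have hF2int : IntegrableOn F2 (Icc tk T) volume := hCint.add hDint
  -- increments
  have hxinc : ∀ a ∈ Icc tk T, ∀ b ∈ Icc tk T, x b - x a = ∫ s in a..b, F1 s := by
    intro a ha b hb
    rw [hx b hb, hx a ha]
    have := intervalIntegral.integral_interval_sub_left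
      (hII F1 hF1int tk htkmem b hb) (hII F1 hF1int tk htkmem a ha)
    rw [← this]; abel
  have hyinc : ∀ a ∈ Icc tk T, ∀ b ∈ Icc tk T, y b - y a = ∫ s in a..b, F2 s := by
    intro a ha b hb
    rw [hy b hb, hy a ha]
    have := intervalIntegral.integral_interval_sub_left
      (hII F2 hF2int tk htkmem b hb) (hII F2 hF2int tk htkmem a ha)
    rw [← this]; abel
  set P : ℝ → Fin n → ℝ := fun t => ∫ s in tk..t, q s with hPdef
  have hPinc : ∀ a ∈ Icc tk T, ∀ b ∈ Icc tk T, P b - P a = ∫ s in a..b, q s := by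
    intro a ha b hb
    exact intervalIntegral.integral_interval_sub_left
      (hII q hqint tk htkmem b hb) (hII q hqint tk htkmem a ha)
  have hsubI : ∀ a ∈ Icc tk T, ∀ b ∈ Icc tk T, Set.uIoc a b ⊆ Icc tk T := by
    intro a ha b hb
    refine subset_trans Set.uIoc_subset_uIcc ?_
    have ha' : a ∈ uIcc tk T := by rwa [uIcc_of_le htkT]
    have hb' : b ∈ uIcc tk T := by rwa [uIcc_of_le htkT]
    simpa [uIcc_of_le htkT] using uIcc_subset_uIcc ha' hb'
  -- Lipschitz of x and y
  have hxLip : ∀ a ∈ Icc tk T, ∀ b ∈ Icc tk T, ‖x b - x a‖ ≤ (K + K') * |b - a| := by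
    intro a ha b hb
    rw [hxinc a ha b hb]
    refine intervalIntegral.norm_integral_le_of_norm_le_const fun s hs => ?_
    have hsI := hsubI a ha b hb hs
    simp only [hF1def]
    refine (norm_add_le _ _).trans ?_
    exact add_le_add (hK _) (hBpt s hsI)
  have hyLip : ∀ a ∈ Icc tk T, ∀ b ∈ Icc tk T, ‖y b - y a‖ ≤ (K + K') * |b - a| := by
    intro a ha b hb
    rw [hyinc a ha b hb]
    refine intervalIntegral.norm_integral_le_of_norm_le_const fun s hs => ?_
    have hsI := hsubI a ha b hb hs
    simp only [hF2def]
    refine (norm_add_le _ _).trans ?_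
    exact add_le_add (hK _) (hDpt s hsI)
  -- bounds on P
  have hP0 : P tk = 0 := by simp [hPdef]
  have hPb : ∀ t ∈ Icc tk T, ‖P t‖ ≤ 2 * K' * (t - tk) := by
    intro t ht
    have : ‖P t‖ ≤ 2 * K' * |t - tk| := by
      refine intervalIntegral.norm_integral_le_of_norm_le_const fun s hs => ?_
      exact hqpt s (hsubI tk htkmem t ht hs)
    rwa [abs_of_nonneg (by linarith [ht.1])] at this
  have hPcont : ContinuousOn P (Icc tk T) := by
    have := intervalIntegral.continuousOn_primitive_interval
      (a := tk) (b := T) (f := q) (μ := volume) (by rwa [uIcc_of_le htkT])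
    rwa [uIcc_of_le htkT] at this
  -- continuity of G
  have hGcont : ContinuousOn G (Icc tk T) := by
    refine ContinuousOn.add ?_ ?_
    · exact (hf.continuous.comp_continuousOn hxc).sub (hf.continuous.comp_continuousOn hyc)
    · refine continuousOn_finset_sum _ fun i _ => ContinuousOn.fun_const_smul ?_ _
      exact ((hg i).continuous.comp_continuousOn hxc).sub ((hg i).continuous.comp_continuousOn hyc)
  -- step 6a : E bound
  have hE : ∀ t ∈ Icc tk T, ‖x t - y t‖ ≤ 2 * K' * (t - tk) := by
    have hcontE : ContinuousOn (fun t => ‖x t - y t‖) (Icc tk T) := (hxc.sub hyc).norm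
    have hslope : ∀ t ∈ Ico tk T, ∀ r, (fun _ : ℝ => 2 * K') t < r →
        ∃ᶠ z in nhdsWithin t (Ioi t),
          (z - t)⁻¹ * (‖x z - y z‖ - ‖x t - y t‖) < r := by
      intro t ht r hr
      simp only at hr
      set ε0 := (r - 2 * K') / 2 with hε0def
      have hε0pos : 0 < ε0 := by simp only [hε0def]; linarith
      have htI : t ∈ Icc tk T := Ico_subset_Icc_self ht
      set av := f (x t) - f (y t) with havdef
      have hdis : ∀ k, (∀ j, |(x t - y t) j| ≤ |(x t - y t) k|) →
          (x t - y t) k * av k ≤ 0 := diss_aux f hf hΛ (x t) (y t)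
      have h0 : x t - y t = 0 → av = 0 := by
        intro hz
        rw [havdef, sub_eq_zero.mp hz, sub_self]
      obtain ⟨δ₁, hδ₁, hs1⟩ := slope_aux (x t - y t) av hdis h0
      have hcont2 : ContinuousWithinAt (fun s => f (x s) - f (y s)) (Icc tk T) t :=
        ((hf.continuous.comp_continuousOn hxc).sub
          (hf.continuous.comp_continuousOn hyc)) t htI
      rw [Metric.continuousWithinAt_iff] at hcont2
      obtain ⟨δ₂, hδ₂, hball⟩ := hcont2 ε0 hε0pos
      have hδpos : 0 < min δ₁ δ₂ := lt_min hδ₁ hδ₂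
      have hIoo : Ioo t (min T (t + min δ₁ δ₂)) ∈ nhdsWithin t (Ioi t) :=
        Ioo_mem_nhdsGT_of_mem ⟨le_refl t, lt_min ht.2 (by linarith)⟩
      refine Filter.Eventually.frequently (Filter.eventually_of_mem hIoo fun z hz => ?_)
      obtain ⟨hz1, hz2⟩ := hz
      have hzT : z ≤ T := le_of_lt (lt_of_lt_of_le hz2 (min_le_left _ _))
      have hzδ : z - t < min δ₁ δ₂ := by
        have := lt_of_lt_of_le hz2 (min_le_right _ _); linarith
      have hzt : 0 < z - t := by linarith
      have hzI : z ∈ Icc tk T := ⟨by linarith [htI.1], hzT⟩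
      have hint_fx : IntervalIntegrable (fun s => f (x s)) volume t z := hII _ hAint t htI z hzI
      have hint_fy : IntervalIntegrable (fun s => f (y s)) volume t z := hII _ hCint t htI z hzI
      have hint_B : IntervalIntegrable (fun s => ∑ i, v i s • g i (x s)) volume t z :=
        hII _ hBint t htI z hzI
      have hint_D : IntervalIntegrable (fun s => ∑ i, w i • g i (y s)) volume t z :=
        hII _ hDint t htI z hzI
      have e1 : x z - x t = (∫ s in t..z, f (x s)) + ∫ s in t..z, ∑ i, v i s • g i (x s) := by
        rw [hxinc t htI z hzI]
        simp only [hF1def]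
        exact intervalIntegral.integral_add hint_fx hint_B
      have e2 : y z - y t = (∫ s in t..z, f (y s)) + ∫ s in t..z, ∑ i, w i • g i (y s) := by
        rw [hyinc t htI z hzI]
        simp only [hF2def]
        exact intervalIntegral.integral_add hint_fy hint_D
      have e3 : (∫ s in t..z, (f (x s) - f (y s) - av)) =
          ((∫ s in t..z, f (x s)) - ∫ s in t..z, f (y s)) - (z - t) • av := by
        rw [intervalIntegral.integral_sub (hint_fx.sub hint_fy) intervalIntegrable_const,
          intervalIntegral.integral_sub hint_fx hint_fy, intervalIntegral.integral_const]
      have hkeyeq : x z - y z = ((x t - y t) + (z - t) • av +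
          (∫ s in t..z, (f (x s) - f (y s) - av))) +
          ((∫ s in t..z, ∑ i, v i s • g i (x s)) - ∫ s in t..z, ∑ i, w i • g i (y s)) := by
        have expand : x z - y z = (x t - y t) + ((x z - x t) - (y z - y t)) := by abel
        rw [expand, e1, e2, e3]
        abel
      have b1 : ‖(x t - y t) + (z - t) • av‖ ≤ ‖x t - y t‖ :=
        hs1 (z - t) hzt (lt_of_lt_of_le hzδ (min_le_left _ _))
      have b2 : ‖∫ s in t..z, (f (x s) - f (y s) - av)‖ ≤ ε0 * |z - t| := by
        refine intervalIntegral.norm_integral_le_of_norm_le_const fun s hs => ?_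
        have hsIcc : s ∈ Icc tk T := hsubI t htI z hzI hs
        have hsIoc : s ∈ Ioc t z := by rwa [Set.uIoc_of_le hz1.le] at hs
        have hdist : dist s t < δ₂ := by
          rw [Real.dist_eq, abs_of_pos (by linarith [hsIoc.1] : (0:ℝ) < s - t)]
          have := hsIoc.2
          have := lt_of_lt_of_le hzδ (min_le_right _ _)
          linarith
        have := hball hsIcc hdist
        rw [dist_eq_norm] at this
        exact le_of_lt this
      have b3 : ‖∫ s in t..z, ∑ i, v i s • g i (x s)‖ ≤ K' * |z - t| := by
        refine intervalIntegral.norm_integral_le_of_norm_le_const fun s hs => ?_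
        exact hBpt s (hsubI t htI z hzI hs)
      have b4 : ‖∫ s in t..z, ∑ i, w i • g i (y s)‖ ≤ K' * |z - t| := by
        refine intervalIntegral.norm_integral_le_of_norm_le_const fun s hs => ?_
        exact hDpt s (hsubI t htI z hzI hs)
      have habs : |z - t| = z - t := abs_of_pos hzt
      rw [habs] at b2 b3 b4
      have tfinal : ‖x z - y z‖ - ‖x t - y t‖ ≤ (z - t) * (2 * K' + ε0) := by
        have tri : ‖x z - y z‖ ≤ (‖(x t - y t) + (z - t) • av‖ +
            ‖∫ s in t..z, (f (x s) - f (y s) - av)‖) +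
            (‖∫ s in t..z, ∑ i, v i s • g i (x s)‖ +
              ‖∫ s in t..z, ∑ i, w i • g i (y s)‖) := by
          rw [hkeyeq]
          refine (norm_add_le _ _).trans ?_
          exact add_le_add (norm_add_le _ _) (norm_sub_le _ _)
        nlinarith
      calc (z - t)⁻¹ * (‖x z - y z‖ - ‖x t - y t‖)
          ≤ (z - t)⁻¹ * ((z - t) * (2 * K' + ε0)) := by
            exact mul_le_mul_of_nonneg_left tfinal (by positivity)
        _ = 2 * K' + ε0 := by field_simp
        _ < r := by simp only [hε0def]; linarith
    have key := le_gronwallBound_of_liminf_deriv_right_le (f := fun t => ‖x t - y t‖)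
      (f' := fun _ : ℝ => 2 * K') (δ := 0) (K := 0) (ε := 2 * K') (a := tk) (b := T)
      hcontE hslope (by simp [hinit]) (fun t _ => by simp)
    intro t ht
    have := key t ht
    rw [gronwallBound_K0] at this
    simpa using this
  -- step 6b : psi bound
  set ψ : ℝ → Fin n → ℝ := fun t => x t - y t - P t with hψdef
  have hψT : ‖ψ T‖ ≤ K' * (L + L') * h ^ 2 := by
    set W := K' * (L + L') with hWdef
    have hW0 : 0 ≤ W := mul_nonneg hK'0 (by linarith)
    have hψcont : ContinuousOn ψ (Icc tk T) := (hxc.sub hyc).sub hPcont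
    have hψ0 : ψ tk = 0 := by
      simp only [hψdef, hP0, hinit, sub_self, sub_zero]
    have hGint : ∀ a ∈ Icc tk T, ∀ b ∈ Icc tk T, IntervalIntegrable G volume a b := by
      intro a ha b hb
      refine ContinuousOn.intervalIntegrable (hGcont.mono ?_)
      have ha' : a ∈ uIcc tk T := by rwa [uIcc_of_le htkT]
      have hb' : b ∈ uIcc tk T := by rwa [uIcc_of_le htkT]
      simpa [uIcc_of_le htkT] using uIcc_subset_uIcc ha' hb'
    have hψinc : ∀ a ∈ Icc tk T, ∀ b ∈ Icc tk T, ψ b - ψ a = ∫ s in a..b, G s := by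
      intro a ha b hb
      have hx' := hxinc a ha b hb
      have hy' := hyinc a ha b hb
      have hq' := hPinc a ha b hb
      have hsplit : ψ b - ψ a = (x b - x a) - (y b - y a) - (P b - P a) := by
        simp only [hψdef]; abel
      rw [hsplit, hx', hy', hq',
        ← intervalIntegral.integral_sub (hII F1 hF1int a ha b hb) (hII F2 hF2int a ha b hb),
        ← intervalIntegral.integral_sub
          ((hII F1 hF1int a ha b hb).sub (hII F2 hF2int a ha b hb)) (hII q hqint a ha b hb)]
      apply intervalIntegral.integral_congr
      intro s _
      simp only [hF1def, hF2def, hqdef, hGdef, sub_smul, smul_sub, Finset.sum_sub_distrib]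
      abel
    set fB : ℝ → ℝ := fun t => ‖ψ t‖ - W * (t - tk) ^ 2 with hfBdef
    have hfBcont : ContinuousOn fB (Icc tk T) := by
      exact hψcont.norm.sub
        (Continuous.continuousOn (continuous_const.mul
          ((continuous_id.sub continuous_const).pow 2)))
    have hψbound : ∀ ε', 0 < ε' → ‖ψ T‖ - W * h ^ 2 ≤ ε' * h := by
      intro ε' hε'
      have hslope : ∀ t ∈ Ico tk T, ∀ r, (fun _ : ℝ => (0:ℝ)) t < r →
          ∃ᶠ z in nhdsWithin t (Ioi t), (z - t)⁻¹ * (fB z - fB t) < r := by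
        intro t ht r hr
        simp only at hr
        set ε0 := r / 2 with hε0def
        have hε0pos : 0 < ε0 := by simp only [hε0def]; linarith
        have htI : t ∈ Icc tk T := Ico_subset_Icc_self ht
        set yt := y t + P t with hytdef
        set av := f (x t) - f yt with havdef
        set bv := G t - av with hbvdef
        have hψt : ψ t = x t - yt := by
          simp only [hψdef, hytdef]; abel
        have hdis : ∀ k, (∀ j, |ψ t j| ≤ |ψ t k|) → ψ t k * av k ≤ 0 := by
          rw [hψt]
          exact diss_aux f hf hΛ (x t) yt
        have h0 : ψ t = 0 → av = 0 := by
          intro hz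
          rw [hψt] at hz
          rw [havdef, sub_eq_zero.mp hz, sub_self]
        obtain ⟨δ₁, hδ₁, hs1⟩ := slope_aux (ψ t) av hdis h0
        have hbv_eq : bv = (f yt - f (y t)) + ∑ i, w i • (g i (x t) - g i (y t)) := by
          simp only [hbvdef, hGdef, havdef]; abel
        have hbv : ‖bv‖ ≤ 2 * W * (t - tk) := by
          have step1 : ‖bv‖ ≤ ‖f yt - f (y t)‖ + ‖∑ i, w i • (g i (x t) - g i (y t))‖ :=
            hbv_eq ▸ norm_add_le _ _
          have step2 : ‖f yt - f (y t)‖ ≤ L * ‖P t‖ := by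
            have := hfLip yt (y t)
            rwa [hytdef, add_sub_cancel_left] at this
          have step3 : ‖∑ i, w i • (g i (x t) - g i (y t))‖ ≤ L' * ‖x t - y t‖ := by
            refine (norm_sum_le _ _).trans ?_
            rw [hL'def, Finset.sum_mul]
            refine Finset.sum_le_sum fun i _ => ?_
            rw [norm_smul, Real.norm_eq_abs]
            calc |w i| * ‖g i (x t) - g i (y t)‖
                ≤ V i * (Lg i * ‖x t - y t‖) :=
                  mul_le_mul (hwV i) (hgLip i _ _) (norm_nonneg _) (hV0 i)
              _ = V i * Lg i * ‖x t - y t‖ := by ring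
          have step4 : L * ‖P t‖ ≤ L * (2 * K' * (t - tk)) :=
            mul_le_mul_of_nonneg_left (hPb t htI) hL0
          have step5 : L' * ‖x t - y t‖ ≤ L' * (2 * K' * (t - tk)) :=
            mul_le_mul_of_nonneg_left (hE t htI) hL'0
          calc ‖bv‖ ≤ L * (2 * K' * (t - tk)) + L' * (2 * K' * (t - tk)) := by linarith
            _ = 2 * W * (t - tk) := by rw [hWdef]; ring
        have hcont2 := hGcont t htI
        rw [Metric.continuousWithinAt_iff] at hcont2
        obtain ⟨δ₂, hδ₂, hball⟩ := hcont2 ε0 hε0pos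
        have hIoo : Ioo t (min T (t + min δ₁ δ₂)) ∈ nhdsWithin t (Ioi t) :=
          Ioo_mem_nhdsGT_of_mem ⟨le_refl t, lt_min ht.2 (by have := lt_min hδ₁ hδ₂; linarith)⟩
        refine Filter.Eventually.frequently (Filter.eventually_of_mem hIoo fun z hz => ?_)
        obtain ⟨hz1, hz2⟩ := hz
        have hzT : z ≤ T := le_of_lt (lt_of_lt_of_le hz2 (min_le_left _ _))
        have hzδ : z - t < min δ₁ δ₂ := by
          have := lt_of_lt_of_le hz2 (min_le_right _ _); linarith
        have hzt : 0 < z - t := by linarith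
        have hzI : z ∈ Icc tk T := ⟨by linarith [htI.1], hzT⟩
        have h1 : ψ z - ψ t = ∫ s in t..z, G s := hψinc t htI z hzI
        have h2 : (∫ s in t..z, (G s - G t)) = (∫ s in t..z, G s) - (z - t) • G t := by
          rw [intervalIntegral.integral_sub (hGint t htI z hzI) intervalIntegrable_const,
            intervalIntegral.integral_const]
        have h3 : G t = av + bv := by rw [hbvdef]; abel
        have hψz : ψ z = (ψ t + (z - t) • av) +
            ((z - t) • bv + ∫ s in t..z, (G s - G t)) := by
          have h4 : ψ z = ψ t + ∫ s in t..z, G s := by rw [← h1]; abel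
          rw [h4, h2, h3, smul_add]
          abel
        have b1 : ‖ψ t + (z - t) • av‖ ≤ ‖ψ t‖ :=
          hs1 (z - t) hzt (lt_of_lt_of_le hzδ (min_le_left _ _))
        have b2 : ‖(z - t) • bv‖ ≤ (z - t) * (2 * W * (t - tk)) := by
          rw [norm_smul, Real.norm_eq_abs, abs_of_pos hzt]
          exact mul_le_mul_of_nonneg_left hbv (le_of_lt hzt)
        have b3 : ‖∫ s in t..z, (G s - G t)‖ ≤ ε0 * (z - t) := by
          have : ‖∫ s in t..z, (G s - G t)‖ ≤ ε0 * |z - t| := by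
            refine intervalIntegral.norm_integral_le_of_norm_le_const fun s hs => ?_
            have hsIcc : s ∈ Icc tk T := hsubI t htI z hzI hs
            have hsIoc : s ∈ Ioc t z := by rwa [Set.uIoc_of_le hz1.le] at hs
            have hdist : dist s t < δ₂ := by
              rw [Real.dist_eq, abs_of_pos (by linarith [hsIoc.1] : (0:ℝ) < s - t)]
              have := hsIoc.2
              have := lt_of_lt_of_le hzδ (min_le_right _ _)
              linarith
            have := hball hsIcc hdist
            rw [dist_eq_norm] at this
            exact le_of_lt this
          rwa [abs_of_pos hzt] at this
        have hnorm : ‖ψ z‖ ≤ ‖ψ t‖ + (z - t) * (2 * W * (t - tk)) + ε0 * (z - t) := by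
          rw [hψz]
          have tri1 := norm_add_le (ψ t + (z - t) • av)
            ((z - t) • bv + ∫ s in t..z, (G s - G t))
          have tri2 := norm_add_le ((z - t) • bv) (∫ s in t..z, (G s - G t))
          linarith
        have hfBz : fB z - fB t ≤ (z - t) * ε0 := by
          have expand : fB z - fB t =
              (‖ψ z‖ - W * (z - tk) ^ 2) - (‖ψ t‖ - W * (t - tk) ^ 2) := rfl
          rw [expand]
          nlinarith [hnorm, mul_nonneg hW0 (sq_nonneg (z - t))]
        calc (z - t)⁻¹ * (fB z - fB t) ≤ (z - t)⁻¹ * ((z - t) * ε0) :=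
              mul_le_mul_of_nonneg_left hfBz (by positivity)
          _ = ε0 := by field_simp
          _ < r := by simp only [hε0def]; linarith
      have key := le_gronwallBound_of_liminf_deriv_right_le (f := fB)
        (f' := fun _ : ℝ => (0:ℝ)) (δ := 0) (K := 0) (ε := ε') (a := tk) (b := T)
        hfBcont hslope (by simp [hfBdef, hψ0]) (fun t _ => by simp; linarith)
      have hkeyT := key T hTmem
      rw [gronwallBound_K0] at hkeyT
      simp only [hfBdef] at hkeyT
      have hTtk : T - tk = h := by rw [hTdef]; ring
      rw [hTtk] at hkeyT
      linarith
    by_contra hcon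
    push_neg at hcon
    set εbad := (‖ψ T‖ - W * h ^ 2) / 2 with hεbad
    have hεbadpos : 0 < εbad := by simp only [hεbad]; linarith
    have := hψbound (εbad / h) (by positivity)
    rw [div_mul_cancel₀ _ (ne_of_gt hh)] at this
    simp only [hεbad] at this
    linarith
  -- step 5b : P T bound
  have hPT : ‖P T‖ ≤ (K + K') * L' * h ^ 2 / 3 := by
    have hTh : T - tk = h := by rw [hTdef]; ring
    have hint_i : ∀ i, IntegrableOn (fun s => (v i s - w i) • g i (x s)) (Icc tk T) volume := by
      intro i
      refine hbdd_int _ (2 * (V i * Kg i))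
        (((hvm i).sub aestronglyMeasurable_const).smul (hgxm i)) ?_
      intro s hs
      rw [norm_smul, Real.norm_eq_abs]
      calc |v i s - w i| * ‖g i (x s)‖ ≤ (V i + V i) * Kg i := by
            refine mul_le_mul ?_ (hKg i _) (norm_nonneg _) (by linarith [hV0 i])
            exact (abs_sub _ _).trans (add_le_add (hV i s hs) (hwV i))
        _ = 2 * (V i * Kg i) := by ring
    have hPT_sum : P T = ∑ i, ∫ s in tk..T, (v i s - w i) • g i (x s) := by
      simp only [hPdef, hqdef]
      exact intervalIntegral.integral_finset_sum
        (fun i _ => hII _ (hint_i i) tk htkmem T hTmem)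
    have hIi : ∀ i : Fin m, ‖∫ s in tk..T, (v i s - w i) • g i (x s)‖ ≤
        V i * Lg i * (K + K') * h ^ 2 / 3 := by
      intro i
      set φ : ℝ → Fin n → ℝ := fun s => g i (x s) with hφdef
      have hφcont : ContinuousOn φ (Icc tk T) := (hg i).continuous.comp_continuousOn hxc
      have hφm : AEStronglyMeasurable φ (volume.restrict (Icc tk T)) := hgxm i
      have hφOn : IntegrableOn φ (Icc tk T) volume :=
        hbdd_int _ (Kg i) hφm fun s _ => hKg i _
      have hφII : IntervalIntegrable φ volume tk T := hII _ hφOn tk htkmem T hTmem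
      have hvOn : IntegrableOn (v i) (Icc tk T) volume := by
        refine ⟨hvm i, ?_⟩
        refine HasFiniteIntegral.restrict_of_bounded (C := V i) hfin.lt_top ?_
        refine (ae_restrict_iff' measurableSet_Icc).2 (Filter.Eventually.of_forall ?_)
        intro s hs
        simpa [Real.norm_eq_abs] using hV i s hs
      have hvII : IntervalIntegrable (v i) volume tk T := by
        apply IntegrableOn.intervalIntegrable
        rwa [uIcc_of_le htkT]
      have hvφOn : IntegrableOn (fun s => v i s • φ s) (Icc tk T) volume := by
        refine hbdd_int _ (V i * Kg i) ((hvm i).smul hφm) ?_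
        intro s hs
        rw [norm_smul, Real.norm_eq_abs]
        exact mul_le_mul (hV i s hs) (hKg i _) (norm_nonneg _) (hV0 i)
      have hvφII : IntervalIntegrable (fun s => v i s • φ s) volume tk T :=
        hII _ hvφOn tk htkmem T hTmem
      set Cv : ℝ := ∫ s in tk..T, v i s with hCvdef
      set Cφ : Fin n → ℝ := ∫ s in tk..T, φ s with hCφdef
      set Cvφ : Fin n → ℝ := ∫ s in tk..T, v i s • φ s with hCvφdef
      set Mi : ℝ := 2 * V i * Lg i * (K + K') with hMidef
      have hMi0 : 0 ≤ Mi := by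
        rw [hMidef]
        have := hV0 i
        have := hLg0 i
        positivity
      -- the inner integral expansion
      have hinner : ∀ s ∈ Icc tk T, (∫ σ in tk..T, (v i s - v i σ) • (φ s - φ σ)) =
          h • (v i s • φ s) - v i s • Cφ - Cv • φ s + Cvφ := by
        intro s hs
        have hexp : (fun σ => (v i s - v i σ) • (φ s - φ σ)) =
            fun σ => (v i s • φ s - v i s • φ σ) - (v i σ • φ s - v i σ • φ σ) := by
          funext σ
          rw [sub_smul, smul_sub, smul_sub]
        have intB : IntervalIntegrable (fun σ => v i s • φ σ) volume tk T := hφII.smul (v i s)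
        have intC : IntervalIntegrable (fun σ => v i σ • φ s) volume tk T := by
          refine hII _ (hbdd_int _ (V i * ‖φ s‖) ((hvm i).fun_smul aestronglyMeasurable_const) ?_)
            tk htkmem T hTmem
          intro σ hσ
          rw [norm_smul, Real.norm_eq_abs]
          exact mul_le_mul_of_nonneg_right (hV i σ hσ) (norm_nonneg _)
        rw [hexp, intervalIntegral.integral_sub (intervalIntegrable_const.sub intB)
            (intC.sub hvφII),
          intervalIntegral.integral_sub intervalIntegrable_const intB,
          intervalIntegral.integral_sub intC hvφII,
          intervalIntegral.integral_const, intervalIntegral.integral_smul,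
          intervalIntegral.integral_smul_const, hTh, ← hCφdef, ← hCvdef, ← hCvφdef]
        abel
      -- closed form N and its integral
      set N : ℝ → Fin n → ℝ := fun s => h • (v i s • φ s) - v i s • Cφ - Cv • φ s + Cvφ
        with hNdef
      have hNm : AEStronglyMeasurable N (volume.restrict (Icc tk T)) := by
        refine AEStronglyMeasurable.add ?_ aestronglyMeasurable_const
        refine AEStronglyMeasurable.sub ?_ (hφm.const_smul Cv)
        exact (((hvm i).smul hφm).const_smul h).sub ((hvm i).smul aestronglyMeasurable_const)
      -- pointwise bound on N
      have hNnorm : ∀ s ∈ Icc tk T, ‖N s‖ ≤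
          Mi / 2 * (s - tk) ^ 2 + Mi / 2 * (T - s) ^ 2 := by
        intro s hs
        have hNs : N s = ∫ σ in tk..T, (v i s - v i σ) • (φ s - φ σ) := (hinner s hs).symm
        rw [hNs]
        refine (intervalIntegral.norm_integral_le_integral_norm htkT).trans ?_
        have intnrm : IntervalIntegrable (fun σ => ‖(v i s - v i σ) • (φ s - φ σ)‖) volume tk T := by
          refine IntervalIntegrable.norm (hII _ (hbdd_int _ ((V i + V i) * (Kg i + Kg i))
            ((aestronglyMeasurable_const.fun_sub (hvm i)).fun_smul
              (aestronglyMeasurable_const.fun_sub hφm)) ?_) tk htkmem T hTmem)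
          intro σ hσ
          rw [norm_smul, Real.norm_eq_abs]
          refine mul_le_mul ?_ ?_ (norm_nonneg _) (by linarith [hV0 i])
          · exact (abs_sub _ _).trans (add_le_add (hV i s hs) (hV i σ hσ))
          · exact (norm_sub_le _ _).trans (add_le_add (hKg i _) (hKg i _))
        have intrhs : IntervalIntegrable (fun σ => Mi * |s - σ|) volume tk T :=
          (continuous_const.mul ((continuous_const.sub continuous_id).abs)).intervalIntegrable _ _
        have hmono : (∫ σ in tk..T, ‖(v i s - v i σ) • (φ s - φ σ)‖) ≤
            ∫ σ in tk..T, Mi * |s - σ| := by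
          refine intervalIntegral.integral_mono_on htkT intnrm intrhs ?_
          intro σ hσ
          rw [norm_smul, Real.norm_eq_abs]
          calc |v i s - v i σ| * ‖φ s - φ σ‖
              ≤ (V i + V i) * (Lg i * ((K + K') * |s - σ|)) := by
                refine mul_le_mul ?_ ?_ (norm_nonneg _) (by linarith [hV0 i])
                · exact (abs_sub _ _).trans (add_le_add (hV i s hs) (hV i σ hσ))
                · refine (hgLip i (x s) (x σ)).trans ?_
                  exact mul_le_mul_of_nonneg_left (hxLip σ hσ s hs) (hLg0 i)
            _ = Mi * |s - σ| := by rw [hMidef]; ring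
        refine hmono.trans ?_
        -- compute ∫ |s - σ|
        have habs1 : (∫ σ in tk..s, |s - σ|) = (s - tk) ^ 2 / 2 := by
          have hcg : (∫ σ in tk..s, |s - σ|) = ∫ σ in tk..s, (s - σ) := by
            refine intervalIntegral.integral_congr ?_
            intro σ hσ
            rw [uIcc_of_le hs.1] at hσ
            exact abs_of_nonneg (by linarith [hσ.2])
          rw [hcg, intervalIntegral.integral_sub intervalIntegrable_const
            intervalIntegral.intervalIntegrable_id, intervalIntegral.integral_const, integral_id]
          simp only [smul_eq_mul]
          ring
        have habs2 : (∫ σ in s..T, |s - σ|) = (T - s) ^ 2 / 2 := by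
          have hcg : (∫ σ in s..T, |s - σ|) = ∫ σ in s..T, (σ - s) := by
            refine intervalIntegral.integral_congr ?_
            intro σ hσ
            rw [uIcc_of_le hs.2] at hσ
            show |s - σ| = σ - s
            rw [abs_sub_comm]
            exact abs_of_nonneg (by linarith [hσ.1])
          rw [hcg, intervalIntegral.integral_sub intervalIntegral.intervalIntegrable_id
            intervalIntegrable_const, intervalIntegral.integral_const, integral_id]
          simp only [smul_eq_mul]
          ring
        have hadj : (∫ σ in tk..s, |s - σ|) + (∫ σ in s..T, |s - σ|) = ∫ σ in tk..T, |s - σ| :=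
          intervalIntegral.integral_add_adjacent_intervals
            ((continuous_const.sub continuous_id).abs.intervalIntegrable _ _)
            ((continuous_const.sub continuous_id).abs.intervalIntegrable _ _)
        rw [intervalIntegral.integral_const_mul, ← hadj, habs1, habs2]
        ring_nf
        rfl
      have hNOn : IntegrableOn N (Icc tk T) volume := by
        refine hbdd_int _ (Mi / 2 * h ^ 2 + Mi / 2 * h ^ 2) hNm ?_
        intro s hs
        refine (hNnorm s hs).trans ?_
        have h1 : (s - tk) ^ 2 ≤ h ^ 2 := by nlinarith [hs.1, hs.2, hTh]
        have h2 : (T - s) ^ 2 ≤ h ^ 2 := by nlinarith [hs.1, hs.2, hTh]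
        have hMi2 : (0:ℝ) ≤ Mi / 2 := by linarith [hMi0]
        have e1 := mul_le_mul_of_nonneg_left h1 hMi2
        have e2 := mul_le_mul_of_nonneg_left h2 hMi2
        linarith
      have hNII : IntervalIntegrable N volume tk T := hII _ hNOn tk htkmem T hTmem
      -- value of ∫ N
      have hJval : (∫ s in tk..T, N s) = (2 * h) • Cvφ - (2 * Cv) • Cφ := by
        have i1 : IntervalIntegrable (fun s => h • (v i s • φ s)) volume tk T := hvφII.smul h
        have i2 : IntervalIntegrable (fun s => v i s • Cφ) volume tk T := by
          refine hII _ (hbdd_int _ (V i * ‖Cφ‖) ((hvm i).fun_smul aestronglyMeasurable_const) ?_)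
            tk htkmem T hTmem
          intro σ hσ
          rw [norm_smul, Real.norm_eq_abs]
          exact mul_le_mul_of_nonneg_right (hV i σ hσ) (norm_nonneg _)
        have i3 : IntervalIntegrable (fun s => Cv • φ s) volume tk T := hφII.smul Cv
        simp only [hNdef]
        rw [intervalIntegral.integral_add ((i1.sub i2).sub i3) intervalIntegrable_const,
          intervalIntegral.integral_sub (i1.sub i2) i3,
          intervalIntegral.integral_sub i1 i2,
          intervalIntegral.integral_smul, intervalIntegral.integral_smul_const,
          intervalIntegral.integral_smul, intervalIntegral.integral_const, hTh,
          ← hCvdef, ← hCφdef, ← hCvφdef]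
        have e2h : (2 * h) • Cvφ = h • Cvφ + h • Cvφ := by
          rw [← add_smul]; ring_nf
        have e2c : (2 * Cv) • Cφ = Cv • Cφ + Cv • Cφ := by
          rw [← add_smul]; ring_nf
        rw [e2h, e2c]
        abel
      -- norm of J
      have hJnorm : ‖(2 * h) • Cvφ - (2 * Cv) • Cφ‖ ≤ Mi * h ^ 3 / 3 := by
        rw [← hJval]
        refine (intervalIntegral.norm_integral_le_integral_norm htkT).trans ?_
        have intrhs : IntervalIntegrable
            (fun s => Mi / 2 * (s - tk) ^ 2 + Mi / 2 * (T - s) ^ 2) volume tk T := by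
          apply Continuous.intervalIntegrable
          exact (continuous_const.mul ((continuous_id.sub continuous_const).pow 2)).add
            (continuous_const.mul ((continuous_const.sub continuous_id).pow 2))
        have hmono2 : (∫ s in tk..T, ‖N s‖) ≤
            ∫ s in tk..T, (Mi / 2 * (s - tk) ^ 2 + Mi / 2 * (T - s) ^ 2) :=
          intervalIntegral.integral_mono_on htkT hNII.norm intrhs hNnorm
        refine hmono2.trans ?_
        have hpow1 : (∫ s in tk..T, (s - tk) ^ 2) = h ^ 3 / 3 := by
          have := intervalIntegral.integral_comp_sub_right (a := tk) (b := T)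
            (fun u => u ^ 2) tk
          rw [this, sub_self, hTh, integral_pow]
          norm_num
        have hpow2 : (∫ s in tk..T, (T - s) ^ 2) = h ^ 3 / 3 := by
          have := intervalIntegral.integral_comp_sub_left (a := tk) (b := T)
            (fun u => u ^ 2) T
          rw [this, sub_self, hTh, integral_pow]
          norm_num
        have ia : IntervalIntegrable (fun s => Mi / 2 * (s - tk) ^ 2) volume tk T :=
          (continuous_const.mul ((continuous_id.sub continuous_const).pow 2)).intervalIntegrable _ _
        have ib : IntervalIntegrable (fun s => Mi / 2 * (T - s) ^ 2) volume tk T :=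
          (continuous_const.mul ((continuous_const.sub continuous_id).pow 2)).intervalIntegrable _ _
        rw [intervalIntegral.integral_add ia ib,
          intervalIntegral.integral_const_mul, intervalIntegral.integral_const_mul,
          hpow1, hpow2]
        linarith
      -- relate the target integral to J
      have hIieq : (∫ s in tk..T, (v i s - w i) • φ s) = Cvφ - w i • Cφ := by
        have hsplit : (fun s => (v i s - w i) • φ s) =
            fun s => v i s • φ s - w i • φ s := by
          funext s
          rw [sub_smul]
        have iwφ : IntervalIntegrable (fun s => w i • φ s) volume tk T := hφII.smul (w i)
        rw [hsplit, intervalIntegral.integral_sub hvφII iwφ,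
          intervalIntegral.integral_smul, ← hCφdef, ← hCvφdef]
      have hscale : (2 * h) • (∫ s in tk..T, (v i s - w i) • φ s) =
          (2 * h) • Cvφ - (2 * Cv) • Cφ := by
        rw [hIieq, smul_sub, smul_smul]
        congr 2
        rw [hw i, ← hCvdef]
        field_simp
      have hnorm_eq : (2 * h) * ‖∫ s in tk..T, (v i s - w i) • φ s‖ ≤ Mi * h ^ 3 / 3 := by
        have := hJnorm
        rw [← hscale, norm_smul, Real.norm_eq_abs, abs_of_pos (by linarith : (0:ℝ) < 2 * h)]
          at this
        exact this
      have hfin2 : ‖∫ s in tk..T, (v i s - w i) • φ s‖ ≤ V i * Lg i * (K + K') * h ^ 2 / 3 := by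
        have hMie : Mi * h ^ 3 / 3 = (2 * h) * (V i * Lg i * (K + K') * h ^ 2 / 3) := by
          rw [hMidef]; ring
        rw [hMie] at hnorm_eq
        have h2h : (0:ℝ) < 2 * h := by linarith
        exact le_of_mul_le_mul_left hnorm_eq h2h
      exact hfin2
    rw [hPT_sum]
    refine (norm_sum_le _ _).trans ?_
    refine (Finset.sum_le_sum fun i _ => hIi i).trans ?_
    rw [hL'def]
    rw [show (∑ i : Fin m, V i * Lg i * (K + K') * h ^ 2 / 3) =
      (∑ i : Fin m, V i * Lg i) * ((K + K') * h ^ 2 / 3) from by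
        rw [Finset.sum_mul]
        exact Finset.sum_congr rfl fun i _ => by ring]
    ring_nf
    rfl
  -- final assembly
  have hfinal : x T - y T = ψ T + P T := by simp [hψdef]
  calc ‖x T - y T‖ = ‖ψ T + P T‖ := by rw [hfinal]
    _ ≤ ‖ψ T‖ + ‖P T‖ := norm_add_le _ _
    _ ≤ K' * (L + L') * h ^ 2 + (K + K') * L' * h ^ 2 / 3 := add_le_add hψT hPT
    _ ≤ h ^ 2 * ((K + K') * L' / 3 + 2 * K' * (L + L')) := by nlinarith [sq_nonneg h, mul_nonneg hK'0 (by linarith : (0:ℝ) ≤ L + L')]
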